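/- arXiv:1510.05535 — 3 statements merged into one kernel-verified Lean document; each statement's English description precedes it below -/
import Mathlib

section
/- If A and B are alternal moulds in ARI (moulds in the u_i variables with empty-word value 0), then arit(B)·A is alternal, where arit(B)·A = amit(B)·A - anit(B)·A with (amit(B)·A)(w) = Σ_{w=abc, b,c≠∅} A(a⌈c)B(b) and (anit(B)·A)(w) = Σ_{w=abc, a,b≠∅} A(a⌉c)B(b). -/
open List

variable {K : Type*} [Field K] [CharZero K]

/-- The multiset (as a list, with multiplicity) of shuffles of two words. -/
def shuffles {α : Type*} : List α → List α → List (List α)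
  | [], v => [v]
  | u, [] => [u]
  | x :: u, y :: v =>
      ((shuffles u (y :: v)).map (x :: ·)) ++ ((shuffles (x :: u) v).map (y :: ·))
  termination_by u v => u.length + v.length

/-- A mould (at the level of evaluations) is alternal if all its shuffle sums over
pairs of nonempty words vanish. -/
def Alternal (A : List K → K) : Prop :=
  ∀ u v : List K, u ≠ [] → v ≠ [] → ((shuffles u v).map A).sum = 0

/-- mould multiplication `mu`. -/
def mu (A B : List K → K) : List K → K :=
  fun w => ∑ k ∈ Finset.range (w.length + 1), A (w.take k) * B (w.drop k)

/-- `lu(A,B) = mu(A,B) - mu(B,A)`. -/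
def lu (A B : List K → K) : List K → K :=
  fun w => mu A B w - mu B A w

/-- All decompositions of a word into two consecutive subwords. -/
def splits2 {α : Type*} (w : List α) : List (List α × List α) :=
  (List.range (w.length + 1)).map fun k => (w.take k, w.drop k)

/-- All decompositions of a word into three consecutive subwords. -/
def splits3 {α : Type*} (w : List α) : List (List α × List α × List α) :=
  (splits2 w).flatMap fun p => (splits2 p.2).map fun q => (p.1, q.1, q.2)

/-- Add `s` to the first letter of a word. -/
def addFirst (s : K) : List K → List K
  | [] => []
  | x :: xs => (x + s) :: xs

/-- Add `s` to the last letter of a word. -/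
def addLast (s : K) : List K → List K
  | [] => []
  | [x] => [x + s]
  | x :: xs => x :: addLast s xs

/-- `amit` for u-moulds: `(amit(B)·A)(w) = Σ_{w=abc, b,c≠∅} A(a⌈c) B(b)`. -/
def amitU (B A : List K → K) : List K → K := fun w =>
  ((splits3 w).map fun p =>
    match p with
    | (_, [], _) => 0
    | (_, _, []) => 0
    | (a, b, c) => A (a ++ addFirst b.sum c) * B b).sum

/-- `anit` for u-moulds: `(anit(B)·A)(w) = Σ_{w=abc, a,b≠∅} A(a⌉c) B(b)`. -/
def anitU (B A : List K → K) : List K → K := fun w =>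
  ((splits3 w).map fun p =>
    match p with
    | ([], _, _) => 0
    | (_, [], _) => 0
    | (a, b, c) => A (addLast b.sum a ++ c) * B b).sum

/-- `arit(B)·A = amit(B)·A - anit(B)·A` on u-moulds. -/
def aritU (B A : List K → K) : List K → K :=
  fun w => amitU B A w - anitU B A w

/-- the ari bracket on u-moulds. -/
def ariU (A B : List K → K) : List K → K :=
  fun w => aritU B A w + lu A B w - aritU A B w

/-- `amit` for v-moulds. -/
def amitV (B A : List K → K) : List K → K := fun w =>
  ((splits3 w).map fun p =>
    match p with
    | (_, [], _) => 0
    | (_, _, []) => 0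
    | (a, b, c0 :: c') => A (a ++ c0 :: c') * B (b.map (fun x => x - c0))).sum

/-- `anit` for v-moulds. -/
def anitV (B A : List K → K) : List K → K := fun w =>
  ((splits3 w).map fun p =>
    match p with
    | ([], _, _) => 0
    | (_, [], _) => 0
    | (a, b, c) => A (a ++ c) * B (b.map (fun x => x - a.getLastD 0))).sum

/-- `arit(B)·A = amit(B)·A - anit(B)·A` on v-moulds. -/
def aritV (B A : List K → K) : List K → K :=
  fun w => amitV B A w - anitV B A w

/-- the ari bracket on v-moulds. -/
def ariV (A B : List K → K) : List K → K :=
  fun w => aritV B A w + lu A B w - aritV A B w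

/-- `neg(A)(u_1,...,u_r) = A(-u_1,...,-u_r)`. -/
def negM (A : List K → K) : List K → K := fun w => A (w.map fun x => -x)

/-- `push(A)(u_1,...,u_r) = A(-u_1-⋯-u_r, u_1, ..., u_{r-1})`. -/
def pushM (A : List K → K) : List K → K := fun w =>
  match w with
  | [] => A []
  | _ :: _ => A ((-w.sum) :: w.dropLast)

/-- `mantar(A)(u_1,...,u_r) = (-1)^{r-1} A(u_r,...,u_1)`. -/
def mantarM (A : List K → K) : List K → K :=
  fun w => (-1 : K) ^ (w.length + 1) * A w.reverse

/-- argument list for swap from u-moulds to v-moulds: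
`(v_1,...,v_r) ↦ (v_r, v_{r-1}-v_r, ..., v_1-v_2)`. -/
def swapUargs (w : List K) : List K :=
  List.zipWith (· - ·) w.reverse (0 :: w.reverse)

/-- argument list for swap from v-moulds to u-moulds:
`(u_1,...,u_r) ↦ (u_1+⋯+u_r, u_1+⋯+u_{r-1}, ..., u_1)`. -/
def swapVargs (w : List K) : List K :=
  (List.range w.length).map fun i => (w.take (w.length - i)).sum

/-- swap, sending a u-mould to a v-mould. -/
def swapUV (A : List K → K) : List K → K := fun w => A (swapUargs w)

/-- swap, sending a v-mould to a u-mould. -/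
def swapVU (A : List K → K) : List K → K := fun w => A (swapVargs w)

/-- A constant-valued mould: its value depends only on the depth. -/
def IsConstantMould (C : List K → K) : Prop :=
  ∀ w w' : List K, w.length = w'.length → C w = C w'


set_option linter.unusedSectionVars false

section Helpers
variable {α : Type*}

@[simp] lemma shuffles_nil_left (v : List α) : shuffles [] v = [v] := by
  cases v <;> simp [shuffles]

@[simp] lemma shuffles_nil_right (u : List α) : shuffles u [] = [u] := by
  cases u <;> simp [shuffles]

lemma shuffles_cons_cons (x y : α) (u v : List α) :
    shuffles (x :: u) (y :: v)
      = ((shuffles u (y :: v)).map (x :: ·)) ++ ((shuffles (x :: u) v).map (y :: ·)) := by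
  simp [shuffles]

theorem mem_shuffles_length {u v w : List α} (h : w ∈ shuffles u v) :
    w.length = u.length + v.length := by
  match u, v with
  | [], v => simp at h; subst h; simp
  | x :: u, [] => simp at h; subst h; simp
  | x :: u, y :: v =>
    rw [shuffles_cons_cons] at h
    simp only [List.mem_append, List.mem_map] at h
    rcases h with ⟨w', hw', rfl⟩ | ⟨w', hw', rfl⟩
    · have := mem_shuffles_length hw'; simp [this]; omega
    · have := mem_shuffles_length hw'; simp [this]; omega
termination_by u.length + v.length

theorem mem_shuffles_sum {M : Type*} [AddCommMonoid M] {u v w : List M}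
    (h : w ∈ shuffles u v) : w.sum = u.sum + v.sum := by
  match u, v with
  | [], v => simp at h; subst h; simp
  | x :: u, [] => simp at h; subst h; simp
  | x :: u, y :: v =>
    rw [shuffles_cons_cons] at h
    simp only [List.mem_append, List.mem_map] at h
    rcases h with ⟨w', hw', rfl⟩ | ⟨w', hw', rfl⟩
    · have := mem_shuffles_sum hw'; simp [this]; abel
    · have := mem_shuffles_sum hw'; simp [this]; abel
termination_by u.length + v.length

theorem sum_shuffles_comm {M : Type*} [AddCommMonoid M] (u v : List α) (F : List α → M) :
    ((shuffles u v).map F).sum = ((shuffles v u).map F).sum := by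
  match u, v with
  | [], v => simp
  | x :: u, [] => simp
  | x :: u, y :: v =>
    rw [shuffles_cons_cons, shuffles_cons_cons]
    simp only [List.map_append, List.map_map, List.sum_append]
    rw [sum_shuffles_comm u (y :: v) (F ∘ (x :: ·)), sum_shuffles_comm (x :: u) v (F ∘ (y :: ·))]
    exact add_comm _ _
termination_by u.length + v.length

theorem sum_shuffles_snoc {M : Type*} [AddCommMonoid M] (p q : List α) (x y : α)
    (F : List α → M) :
    ((shuffles (p ++ [x]) (q ++ [y])).map F).sum
      = ((shuffles p (q ++ [y])).map fun w => F (w ++ [x])).sum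
        + ((shuffles (p ++ [x]) q).map fun w => F (w ++ [y])).sum := by
  match p, q with
  | [], [] =>
    simp [shuffles_cons_cons]; exact add_comm _ _
  | [], b :: q' =>
    have IH := sum_shuffles_snoc ([] : List α) q' x y (fun w => F (b :: w))
    simp only [List.cons_append, List.nil_append, List.append_assoc] at *
    simp only [shuffles_cons_cons, shuffles_nil_left, shuffles_nil_right, List.map_append,
      List.map_map, List.map_cons, List.map_nil, List.sum_append, List.sum_cons, List.sum_nil,
      Function.comp_def] at *
    simp only [List.cons_append, List.nil_append, List.append_assoc] at *
    rw [IH]; abel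
  | a :: p', [] =>
    have IH := sum_shuffles_snoc p' ([] : List α) x y (fun w => F (a :: w))
    simp only [List.cons_append, List.nil_append, List.append_assoc] at *
    simp only [shuffles_cons_cons, shuffles_nil_left, shuffles_nil_right, List.map_append,
      List.map_map, List.map_cons, List.map_nil, List.sum_append, List.sum_cons, List.sum_nil,
      Function.comp_def] at *
    simp only [List.cons_append, List.nil_append, List.append_assoc] at *
    rw [IH]; abel
  | a :: p', b :: q' =>
    have IH1 := sum_shuffles_snoc p' (b :: q') x y (fun w => F (a :: w))
    have IH2 := sum_shuffles_snoc (a :: p') q' x y (fun w => F (b :: w))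
    simp only [List.cons_append, List.nil_append, List.append_assoc] at *
    simp only [shuffles_cons_cons, shuffles_nil_left, shuffles_nil_right, List.map_append,
      List.map_map, List.map_cons, List.map_nil, List.sum_append, List.sum_cons, List.sum_nil,
      Function.comp_def] at *
    simp only [List.cons_append, List.nil_append, List.append_assoc] at *
    rw [IH1, IH2]; abel
termination_by p.length + q.length
end Helpers
section Helpers2
variable {α : Type*} {M : Type*} [AddCommMonoid M]

@[simp] lemma splits2_nil : splits2 ([] : List α) = [([], [])] := by
  simp [splits2]

lemma splits2_cons (x : α) (w : List α) :
    splits2 (x :: w) = ([], x :: w) :: (splits2 w).map (fun p => (x :: p.1, p.2)) := by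
  simp [splits2, List.range_succ_eq_map, List.map_map, Function.comp]

lemma list_sum_map_add {β : Type*} (l : List β) (f g : β → M) :
    (l.map fun x => f x + g x).sum = (l.map f).sum + (l.map g).sum := by
  induction l with
  | nil => simp
  | cons a l ih => simp [ih]; abel

theorem sum_shuffles_splits2 (u v : List α) (f : List α → List α → M) :
    ((shuffles u v).map fun w => ((splits2 w).map fun p => f p.1 p.2).sum).sum
      = ((splits2 u).map fun p =>
          ((splits2 v).map fun q =>
            ((shuffles p.1 q.1).map fun a =>
              ((shuffles p.2 q.2).map fun c => f a c).sum).sum).sum).sum := by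
  match u, v with
  | [], v => simp
  | x :: u', [] => simp
  | x :: u', y :: v' =>
    have IH1 := sum_shuffles_splits2 u' (y :: v') (fun a c => f (x :: a) c)
    have IH2 := sum_shuffles_splits2 (x :: u') v' (fun a c => f (y :: a) c)
    simp only [shuffles_cons_cons, splits2_cons, shuffles_nil_left, shuffles_nil_right,
      List.map_append, List.map_map, List.map_cons, List.map_nil, List.sum_append,
      List.sum_cons, List.sum_nil, Function.comp_def, list_sum_map_add, add_zero, zero_add] at *
    rw [IH1, IH2]; abel
termination_by u.length + v.length

theorem sum_splits2_marker (p q : List α) (z : α) (v : List α) (A : List α → M) :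
    ((splits2 v).map fun r =>
      ((shuffles p r.1).map fun a =>
        ((shuffles q r.2).map fun c => A (a ++ z :: c)).sum).sum).sum
    = ((shuffles (p ++ z :: q) v).map A).sum := by
  match p, v with
  | p, [] => simp
  | [], y :: v' =>
    have IH := sum_splits2_marker ([] : List α) q z v' (fun w => A (y :: w))
    simp only [List.nil_append] at *
    simp only [splits2_cons, shuffles_cons_cons, shuffles_nil_left, shuffles_nil_right,
      List.map_append, List.map_map, List.map_cons, List.map_nil, List.sum_append,
      List.sum_cons, List.sum_nil, Function.comp_def, list_sum_map_add, add_zero, zero_add,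
      List.cons_append, List.nil_append] at *
    rw [IH]
  | x :: p', y :: v' =>
    have IH1 := sum_splits2_marker p' q z (y :: v') (fun w => A (x :: w))
    have IH2 := sum_splits2_marker (x :: p') q z v' (fun w => A (y :: w))
    simp only [splits2_cons, shuffles_cons_cons, shuffles_nil_left, shuffles_nil_right,
      List.map_append, List.map_map, List.map_cons, List.map_nil, List.sum_append,
      List.sum_cons, List.sum_nil, Function.comp_def, list_sum_map_add, add_zero, zero_add,
      List.cons_append, List.nil_append] at *
    rw [← add_assoc, IH1, IH2]
termination_by p.length + v.length
end Helpers2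
section Helpers3
attribute [local instance] Classical.propDecidable

@[simp] lemma addFirst_nil (s : K) : addFirst s [] = [] := rfl
@[simp] lemma addFirst_cons (s x : K) (c : List K) : addFirst s (x :: c) = (x + s) :: c := rfl
@[simp] lemma addLast_nil (s : K) : addLast s [] = [] := rfl

lemma addLast_cons_cons (s x y : K) (l : List K) :
    addLast s (x :: y :: l) = x :: addLast s (y :: l) := rfl

lemma addLast_concat (s t : K) (a : List K) : addLast s (a ++ [t]) = a ++ [t + s] := by
  induction a with
  | nil => rfl
  | cons x a' ih =>
    cases a' with
    | nil => rfl
    | cons y a'' =>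
      simp only [List.cons_append] at *
      rw [addLast_cons_cons, ih]

lemma list_sum_sub' {β : Type*} (l : List β) (f g : β → K) :
    (l.map fun x => f x - g x).sum = (l.map f).sum - (l.map g).sum := by
  induction l with
  | nil => simp
  | cons a l ih => simp [ih]; ring

lemma list_range_map_sum {M : Type*} [AddCommMonoid M] (n : ℕ) (f : ℕ → M) :
    ((List.range n).map f).sum = ∑ k ∈ Finset.range n, f k := by
  induction n with
  | zero => simp
  | succ n ih => rw [List.range_succ, Finset.sum_range_succ, List.map_append]; simp [ih]

lemma sum_splits2_eq_range {α : Type*} {M : Type*} [AddCommMonoid M] (w : List α)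
    (g : List α × List α → M) :
    ((splits2 w).map g).sum = ∑ k ∈ Finset.range (w.length + 1), g (w.take k, w.drop k) := by
  rw [splits2, List.map_map, list_range_map_sum]; rfl

/-- collapse of a shuffle sum of an alternal mould -/
lemma sum_shuffles_alternal {B : List K → K} (hB : Alternal B) (hB0 : B [] = 0)
    (u v : List K) :
    ((shuffles u v).map B).sum = (if v = [] then B u else 0) + (if u = [] then B v else 0) := by
  rcases eq_or_ne u [] with rfl | hu
  · rcases eq_or_ne v [] with rfl | hv
    · simp [hB0]
    · simp [hv]
  · rcases eq_or_ne v [] with rfl | hv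
    · simp [hu]
    · simp [hu, hv, hB u v hu hv]

/-- splitting the `amit`-side inner sum according to the first letter of `c` -/
lemma csplit (A : List K → K) (s : K) (a u3 v3 : List K) :
    ((shuffles u3 v3).map fun c => if c = [] then 0 else A (a ++ addFirst s c)).sum
      = (match u3 with
          | [] => 0
          | x :: u3' => ((shuffles u3' v3).map fun c' => A (a ++ (x + s) :: c')).sum)
        + (match v3 with
          | [] => 0
          | y :: v3' => ((shuffles u3 v3').map fun c' => A (a ++ (y + s) :: c')).sum) := by
  match u3, v3 with
  | [], [] => simp
  | x :: u3', [] => simp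
  | [], y :: v3' => simp
  | x :: u3', y :: v3' =>
    rw [shuffles_cons_cons]
    simp [List.map_map, Function.comp_def]

/-- splitting the `anit`-side inner sum according to the last letter of `a` -/
lemma asplit (G : List K → K) (s : K) (p r : List K) :
    ((shuffles p r).map fun a => if a = [] then 0 else G (addLast s a)).sum
      = (if p = [] then 0
          else ((shuffles p.dropLast r).map fun a' => G (a' ++ [p.getLastD 0 + s])).sum)
        + (if r = [] then 0
          else ((shuffles p r.dropLast).map fun a' => G (a' ++ [r.getLastD 0 + s])).sum) := by
  rcases p.eq_nil_or_concat with rfl | ⟨p', x, rfl⟩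
  · rcases r.eq_nil_or_concat with rfl | ⟨r', y, rfl⟩
    · simp
    · simp [addLast_concat, List.getLastD_concat]
  · rcases r.eq_nil_or_concat with rfl | ⟨r', y, rfl⟩
    · simp [addLast_concat, List.getLastD_concat]
    · simp only [List.concat_eq_append]
      rw [sum_shuffles_snoc]
      simp [addLast_concat, List.getLastD_concat]

end Helpers3
section Telescope
attribute [local instance] Classical.propDecidable

lemma sum_ite_const {β : Type*} (P : Prop) [Decidable P] (l : List β) (h : β → K) :
    (l.map fun c => if P then 0 else h c).sum = if P then 0 else (l.map h).sum := by
  split <;> simp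

lemma asplit' (A : List K → K) (s : K) (u3 p r2 r : List K) :
    ((shuffles p r).map fun a => if a = [] then 0
        else ((shuffles u3 r2).map fun c => A (addLast s a ++ c)).sum).sum
      = (if p = [] then 0
          else ((shuffles p.dropLast r).map fun a' =>
            ((shuffles u3 r2).map fun c => A (a' ++ (p.getLastD 0 + s) :: c)).sum).sum)
        + (if r = [] then 0
          else ((shuffles p r.dropLast).map fun a' =>
            ((shuffles u3 r2).map fun c => A (a' ++ (r.getLastD 0 + s) :: c)).sum).sum) := by
  have h := asplit (fun X => ((shuffles u3 r2).map fun c => A (X ++ c)).sum) s p r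
  simpa [List.append_assoc] using h

theorem telescope (A : List K → K) (s : K) (u1 u3 v : List K) :
    ((splits2 v).map fun q =>
      ((shuffles u1 q.1).map fun a =>
        ((shuffles u3 q.2).map fun c =>
          (if c = [] then 0 else A (a ++ addFirst s c))
            - (if a = [] then 0 else A (addLast s a ++ c))).sum).sum).sum
      = (if u3 = [] then 0 else ((shuffles (u1 ++ addFirst s u3) v).map A).sum)
        - (if u1 = [] then 0 else ((shuffles (addLast s u1 ++ u3) v).map A).sum) := by
  simp only [list_sum_sub', csplit A s, sum_ite_const, asplit' A s u3, list_sum_map_add]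
  have hshift :
      ((splits2 v).map fun q =>
        ((shuffles u1 q.1).map fun a =>
          match q.2 with
          | [] => (0:K)
          | y :: v3' => ((shuffles u3 v3').map fun c' => A (a ++ (y + s) :: c')).sum).sum).sum
      = ((splits2 v).map fun q =>
          if q.1 = [] then 0 else
            ((shuffles u1 q.1.dropLast).map fun a' =>
              ((shuffles u3 q.2).map fun c => A (a' ++ (q.1.getLastD 0 + s) :: c)).sum).sum).sum := by
    rw [sum_splits2_eq_range, sum_splits2_eq_range, Finset.sum_range_succ,
      Finset.sum_range_succ']
    have h1 : ((shuffles u1 (v.take v.length)).map fun a =>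
        match v.drop v.length with
        | [] => (0:K)
        | y :: v3' => ((shuffles u3 v3').map fun c' => A (a ++ (y + s) :: c')).sum).sum = 0 := by
      simp [List.drop_length]
    have h2 : (if (v.take 0) = ([]:List K) then (0:K) else
        ((shuffles u1 (v.take 0).dropLast).map fun a' =>
          ((shuffles u3 (v.drop 0)).map fun c =>
            A (a' ++ ((v.take 0).getLastD 0 + s) :: c)).sum).sum) = 0 := by
      simp
    rw [h1, h2, add_zero, add_zero]
    apply Finset.sum_congr rfl
    intro k hk
    have hk' : k < v.length := Finset.mem_range.mp hk
    have ht : v.take (k+1) = v.take k ++ [v[k]] := by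
      rw [List.take_succ]; simp [List.getElem?_eq_getElem hk']
    rw [List.drop_eq_getElem_cons hk', ht, List.dropLast_concat, List.getLastD_concat,
      if_neg (show ¬(v.take k ++ [v[k]] = []) from by
        simp only [ne_eq, List.append_eq_nil_iff, List.cons_ne_nil, and_false]
        exact not_false)]
  rw [hshift]
  rcases u1.eq_nil_or_concat with rfl | ⟨p', x', rfl⟩ <;> rcases u3 with _ | ⟨x, u3'⟩ <;>
    simp only [List.concat_eq_append, List.nil_append, addFirst_cons, addLast_nil,
      addLast_concat, List.dropLast_concat, List.getLastD_concat, List.append_assoc,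
      List.cons_append, List.singleton_append, if_pos rfl,
      if_neg (List.cons_ne_nil _ _), shuffles_nil_left]
  · simp
  · have hm := sum_splits2_marker ([]:List K) u3' (x + s) v A
    simp only [List.nil_append, shuffles_nil_left] at hm
    rw [hm]; simp
  · have hm := sum_splits2_marker p' ([]:List K) (x' + s) v A
    simp only [shuffles_nil_left] at hm
    rw [hm]; simp
  · have hm1 := sum_splits2_marker (p' ++ [x']) u3' (x + s) v A
    have hm2 := sum_splits2_marker p' (x :: u3') (x' + s) v A
    rw [hm1, hm2]
    simp [List.append_assoc]

end Telescope
section Helpers5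
attribute [local instance] Classical.propDecidable

lemma list_sum_mul_right {β : Type*} (l : List β) (c : K) (f : β → K) :
    (l.map fun x => f x * c).sum = (l.map f).sum * c := by
  induction l with
  | nil => simp
  | cons a l ih => simp [ih]; ring

lemma list_sum_flatMap {β γ : Type*} {M : Type*} [AddCommMonoid M] (l : List β)
    (f : β → List γ) (g : γ → M) :
    ((l.flatMap f).map g).sum = (l.map fun x => ((f x).map g).sum).sum := by
  induction l with
  | nil => simp
  | cons a l ih => simp [List.flatMap_cons, ih]

lemma list_sum_mul_left {β : Type*} (l : List β) (c : K) (f : β → K) :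
    (l.map fun x => c * f x).sum = c * (l.map f).sum := by
  induction l with
  | nil => simp
  | cons a l ih => simp [ih]; ring

lemma list_sum_swap {β γ : Type*} {M : Type*} [AddCommMonoid M] (l₁ : List β) (l₂ : List γ)
    (F : β → γ → M) :
    (l₁.map fun p => (l₂.map fun q => F p q).sum).sum
      = (l₂.map fun q => (l₁.map fun p => F p q).sum).sum := by
  induction l₁ with
  | nil => simp
  | cons a l ih => simp only [List.map_cons, List.sum_cons, ih, ← list_sum_map_add]

lemma sum_splits3 {α : Type*} {M : Type*} [AddCommMonoid M] (w : List α)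
    (g : List α × List α × List α → M) :
    ((splits3 w).map g).sum
      = ((splits2 w).map fun p => ((splits2 p.2).map fun q => g (p.1, q.1, q.2)).sum).sum := by
  rw [splits3, list_sum_flatMap]
  simp [List.map_map, Function.comp_def]

lemma sum_splits2_if_first_nil {α : Type*} {M : Type*} [AddCommMonoid M] (z : List α)
    (G : List α × List α → M) [∀ q : List α × List α, Decidable (q.1 = [])] :
    ((splits2 z).map fun q => if q.1 = [] then G q else 0).sum = G ([], z) := by
  cases z with
  | nil => simp
  | cons x z' =>
    rw [splits2_cons]
    simp [Function.comp_def]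

lemma addFirst_ne_nil {s : K} {l : List K} (h : l ≠ []) : addFirst s l ≠ [] := by
  cases l with
  | nil => exact absurd rfl h
  | cons x t => simp

lemma addLast_ne_nil {s : K} {l : List K} (h : l ≠ []) : addLast s l ≠ [] := by
  cases l with
  | nil => exact absurd rfl h
  | cons x t => cases t <;> simp [addLast]

lemma amitU_eq (B A : List K → K) (w : List K) :
    amitU B A w = ((splits2 w).map fun p =>
      ((splits2 p.2).map fun q =>
        if q.1 = [] then 0 else if q.2 = [] then 0
        else A (p.1 ++ addFirst q.1.sum q.2) * B q.1).sum).sum := by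
  rw [amitU, sum_splits3]
  congr 1; apply List.map_congr_left; intro p _
  congr 1; apply List.map_congr_left; intro q _
  rcases q with ⟨q1, q2⟩
  rcases q1 with _ | ⟨b0, b'⟩ <;> rcases q2 with _ | ⟨c0, c'⟩ <;> simp

lemma anitU_eq (B A : List K → K) (w : List K) :
    anitU B A w = ((splits2 w).map fun p =>
      ((splits2 p.2).map fun q =>
        if p.1 = [] then 0 else if q.1 = [] then 0
        else A (addLast q.1.sum p.1 ++ q.2) * B q.1).sum).sum := by
  rw [anitU, sum_splits3]
  congr 1; apply List.map_congr_left; intro p _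
  congr 1; apply List.map_congr_left; intro q _
  rcases q with ⟨q1, q2⟩
  rcases p with ⟨p1, p2⟩
  rcases p1 with _ | ⟨a0, a'⟩ <;> rcases q1 with _ | ⟨b0, b'⟩ <;> simp

lemma collapse_amit {A B : List K → K} (hB : Alternal B) (hB0 : B [] = 0)
    (a u2 v2 u3 v3 : List K) :
    ((shuffles u2 v2).map fun b => ((shuffles u3 v3).map fun c =>
        if b = [] then 0 else if c = [] then 0 else A (a ++ addFirst b.sum c) * B b).sum).sum
      = ((if v2 = [] then B u2 else 0) + (if u2 = [] then B v2 else 0)) *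
          ((shuffles u3 v3).map fun c =>
            if c = [] then 0 else A (a ++ addFirst (u2.sum + v2.sum) c)).sum := by
  rw [← sum_shuffles_alternal hB hB0, ← list_sum_mul_right]
  apply congrArg
  apply List.map_congr_left
  intro b hb
  by_cases hbn : b = []
  · subst hbn; simp [hB0]
  · simp only [if_neg hbn, mem_shuffles_sum hb]
    have h : ∀ c : List K, (if c = [] then (0:K)
        else A (a ++ addFirst (u2.sum + v2.sum) c) * B b)
        = (if c = [] then 0 else A (a ++ addFirst (u2.sum + v2.sum) c)) * B b := by
      intro c; split <;> simp
    simp only [h, list_sum_mul_right]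
    exact mul_comm _ _

lemma collapse_anit {A B : List K → K} (hB : Alternal B) (hB0 : B [] = 0)
    (a u2 v2 u3 v3 : List K) :
    ((shuffles u2 v2).map fun b => ((shuffles u3 v3).map fun c =>
        if a = [] then 0 else if b = [] then 0 else A (addLast b.sum a ++ c) * B b).sum).sum
      = ((if v2 = [] then B u2 else 0) + (if u2 = [] then B v2 else 0)) *
          ((shuffles u3 v3).map fun c =>
            if a = [] then 0 else A (addLast (u2.sum + v2.sum) a ++ c)).sum := by
  rw [← sum_shuffles_alternal hB hB0, ← list_sum_mul_right]
  apply congrArg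
  apply List.map_congr_left
  intro b hb
  by_cases hbn : b = []
  · subst hbn; by_cases han : a = [] <;> simp [hB0, han]
  · have h : ∀ c : List K, (if a = [] then (0:K)
        else if b = [] then 0 else A (addLast b.sum a ++ c) * B b)
        = (if a = [] then 0 else A (addLast (u2.sum + v2.sum) a ++ c)) * B b := by
      intro c
      by_cases han : a = []
      · simp [han]
      · simp [han, hbn, mem_shuffles_sum hb]
    simp only [h, list_sum_mul_right]
    exact mul_comm _ _

end Helpers5
section Assembly
attribute [local instance] Classical.propDecidable

/-- the telescoping difference -/
noncomputable def DD (A : List K → K) (s : K) (u3 v3 a : List K) : K :=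
  ((shuffles u3 v3).map fun c =>
    (if c = [] then 0 else A (a ++ addFirst s c))
      - (if a = [] then 0 else A (addLast s a ++ c))).sum

lemma DD_def (A : List K → K) (s : K) (u3 v3 a : List K) :
    ((shuffles u3 v3).map fun c =>
      (if c = [] then 0 else A (a ++ addFirst s c))
        - (if a = [] then 0 else A (addLast s a ++ c))).sum = DD A s u3 v3 a := rfl

lemma DD_flip (A : List K → K) (s : K) (X Y a : List K) :
    DD A s X Y a = DD A s Y X a := by
  unfold DD; exact sum_shuffles_comm _ _ _

lemma sum_ite_const' {β : Type*} (P : Prop) [Decidable P] (l : List β) (h : β → K) :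
    (l.map fun c => if P then h c else 0).sum = if P then (l.map h).sum else 0 := by
  split <;> simp

lemma append_addFirst_ne_nil {s : K} (u1 : List K) {m3 : List K} (h : m3 ≠ []) :
    u1 ++ addFirst s m3 ≠ [] := by
  cases m3 with
  | nil => exact absurd rfl h
  | cons x t => simp

lemma addLast_append_ne_nil {s : K} (m3 : List K) {u1 : List K} (h : u1 ≠ []) :
    addLast s u1 ++ m3 ≠ [] := by
  have := addLast_ne_nil (s := s) h
  cases hh : addLast s u1 with
  | nil => exact absurd hh this
  | cons x t => simp

lemma telescope_zero {A : List K → K} (hA : Alternal A) {v : List K} (hv : v ≠ [])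
    (s : K) (u1 u3 : List K) :
    ((splits2 v).map fun q =>
      ((shuffles u1 q.1).map fun a => DD A s u3 q.2 a).sum).sum = 0 := by
  have ht := telescope A s u1 u3 v
  simp only [DD_def] at ht
  rw [ht]
  have t1 : (if u3 = [] then (0:K)
      else ((shuffles (u1 ++ addFirst s u3) v).map A).sum) = 0 := by
    split
    · rfl
    · exact hA _ v (append_addFirst_ne_nil u1 (by assumption)) hv
  have t2 : (if u1 = [] then (0:K)
      else ((shuffles (addLast s u1 ++ u3) v).map A).sum) = 0 := by
    split
    · rfl
    · exact hA _ v (addLast_append_ne_nil u3 (by assumption)) hv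
  rw [t1, t2, sub_zero]

lemma piece1 (A B : List K → K) (hA : Alternal A) (v : List K) (hv : v ≠ [])
    (u1 U : List K) :
    ((splits2 v).map fun r =>
      ((shuffles u1 r.1).map fun a =>
        ((splits2 U).map fun q2 =>
          ((splits2 r.2).map fun q3 =>
            (if q3.1 = [] then B q2.1 else 0)
              * DD A (q2.1.sum + q3.1.sum) q2.2 q3.2 a).sum).sum).sum).sum = 0 := by
  have hc : ∀ (r2 a : List K) (q2 : List K × List K),
      ((splits2 r2).map fun q3 =>
        (if q3.1 = [] then B q2.1 else 0)
          * DD A (q2.1.sum + q3.1.sum) q2.2 q3.2 a).sum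
      = B q2.1 * DD A q2.1.sum q2.2 r2 a := by
    intro r2 a q2
    have h := sum_splits2_if_first_nil r2
      (fun q3 => B q2.1 * DD A (q2.1.sum + q3.1.sum) q2.2 q3.2 a)
    simp only [ite_mul, zero_mul]
    rw [show (fun q3 : List K × List K => if q3.1 = [] then B q2.1 * DD A (q2.1.sum + q3.1.sum) q2.2 q3.2 a else 0)
        = (fun q3 : List K × List K => if q3.1 = [] then (fun q3 : List K × List K => B q2.1 * DD A (q2.1.sum + q3.1.sum) q2.2 q3.2 a) q3 else 0) from rfl, h]
    simp
  simp only [hc]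
  have hs1 : ∀ r1 r2 : List K,
      ((shuffles u1 r1).map fun a =>
        ((splits2 U).map fun q2 => B q2.1 * DD A q2.1.sum q2.2 r2 a).sum).sum
      = ((splits2 U).map fun q2 =>
        ((shuffles u1 r1).map fun a => B q2.1 * DD A q2.1.sum q2.2 r2 a).sum).sum := by
    intro r1 r2; exact list_sum_swap _ _ _
  simp only [hs1]
  rw [list_sum_swap]
  have hz : ∀ m2 m3 : List K,
      ((splits2 v).map fun r =>
        ((shuffles u1 r.1).map fun a => B m2 * DD A m2.sum m3 r.2 a).sum).sum = 0 := by
    intro m2 m3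
    simp only [list_sum_mul_left]
    rw [telescope_zero hA hv m2.sum u1 m3, mul_zero]
  simp only [hz]
  simp

lemma piece2 (A B : List K → K) (hA : Alternal A) (u v : List K) (hu : u ≠ []) :
    ((splits2 u).map fun p =>
      ((splits2 v).map fun r =>
        ((shuffles p.1 r.1).map fun a =>
          ((splits2 p.2).map fun q2 =>
            ((splits2 r.2).map fun q3 =>
              (if q2.1 = [] then B q3.1 else 0)
                * DD A (q2.1.sum + q3.1.sum) q2.2 q3.2 a).sum).sum).sum).sum).sum = 0 := by
  have hc : ∀ (p2 r2 a : List K),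
      ((splits2 p2).map fun q2 =>
        ((splits2 r2).map fun q3 =>
          (if q2.1 = [] then B q3.1 else 0)
            * DD A (q2.1.sum + q3.1.sum) q2.2 q3.2 a).sum).sum
      = ((splits2 r2).map fun q3 => B q3.1 * DD A q3.1.sum p2 q3.2 a).sum := by
    intro p2 r2 a
    have h := sum_splits2_if_first_nil p2
      (fun q2 => ((splits2 r2).map fun q3 =>
        B q3.1 * DD A (q2.1.sum + q3.1.sum) q2.2 q3.2 a).sum)
    simp only [ite_mul, zero_mul, sum_ite_const']
    rw [h]
    simp
  simp only [hc]
  have hs1 : ∀ (p1 p2 r1 r2 : List K),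
      ((shuffles p1 r1).map fun a =>
        ((splits2 r2).map fun q3 => B q3.1 * DD A q3.1.sum p2 q3.2 a).sum).sum
      = ((splits2 r2).map fun q3 =>
        ((shuffles p1 r1).map fun a => B q3.1 * DD A q3.1.sum p2 q3.2 a).sum).sum := by
    intro p1 p2 r1 r2; exact list_sum_swap _ _ _
  simp only [hs1]
  rw [list_sum_swap]
  have hs2 : ∀ (r1 r2 : List K),
      ((splits2 u).map fun p =>
        ((splits2 r2).map fun q3 =>
          ((shuffles p.1 r1).map fun a => B q3.1 * DD A q3.1.sum p.2 q3.2 a).sum).sum).sum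
      = ((splits2 r2).map fun q3 =>
        ((splits2 u).map fun p =>
          ((shuffles p.1 r1).map fun a => B q3.1 * DD A q3.1.sum p.2 q3.2 a).sum).sum).sum := by
    intro r1 r2; exact list_sum_swap _ _ _
  simp only [hs2]
  have hz : ∀ (r1 m2 m3 : List K),
      ((splits2 u).map fun p =>
        ((shuffles p.1 r1).map fun a => B m2 * DD A m2.sum p.2 m3 a).sum).sum = 0 := by
    intro r1 m2 m3
    simp only [list_sum_mul_left]
    have hf : ∀ (p1 p2 : List K),
        ((shuffles p1 r1).map fun a => DD A m2.sum p2 m3 a).sum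
        = ((shuffles r1 p1).map fun a => DD A m2.sum m3 p2 a).sum := by
      intro p1 p2
      rw [sum_shuffles_comm]
      simp only [DD_flip A m2.sum p2 m3]
    simp only [hf]
    rw [telescope_zero hA hu m2.sum r1 m3, mul_zero]
  simp only [hz]
  simp
end Assembly
section Main
attribute [local instance] Classical.propDecidable

theorem aritU_alternal' (A B : List K → K) (hA0 : A [] = 0) (hB0 : B [] = 0)
    (hA : Alternal A) (hB : Alternal B) : Alternal (aritU B A) := by
  intro u v hu hv
  rw [show (shuffles u v).map (aritU B A)
      = (shuffles u v).map (fun w => amitU B A w - anitU B A w) from rfl]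
  rw [list_sum_sub']
  rw [List.map_congr_left (fun w _ => amitU_eq B A w),
    List.map_congr_left (fun w _ => anitU_eq B A w)]
  rw [sum_shuffles_splits2 u v (fun a z => ((splits2 z).map fun q =>
    if q.1 = [] then (0:K) else if q.2 = [] then 0
    else A (a ++ addFirst q.1.sum q.2) * B q.1).sum)]
  rw [sum_shuffles_splits2 u v (fun a z => ((splits2 z).map fun q =>
    if a = [] then (0:K) else if q.1 = [] then 0
    else A (addLast q.1.sum a ++ q.2) * B q.1).sum)]
  have h3 : ∀ (a U V : List K),
      ((shuffles U V).map fun z => ((splits2 z).map fun q =>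
        if q.1 = [] then (0:K) else if q.2 = [] then 0
        else A (a ++ addFirst q.1.sum q.2) * B q.1).sum).sum
      = ((splits2 U).map fun q2 => ((splits2 V).map fun q3 =>
          ((shuffles q2.1 q3.1).map fun b => ((shuffles q2.2 q3.2).map fun c =>
            if b = [] then (0:K) else if c = [] then 0
            else A (a ++ addFirst b.sum c) * B b).sum).sum).sum).sum :=
    fun a U V => sum_shuffles_splits2 U V (fun b c =>
      if b = [] then (0:K) else if c = [] then 0 else A (a ++ addFirst b.sum c) * B b)
  have h4 : ∀ (a U V : List K),
      ((shuffles U V).map fun z => ((splits2 z).map fun q =>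
        if a = [] then (0:K) else if q.1 = [] then 0
        else A (addLast q.1.sum a ++ q.2) * B q.1).sum).sum
      = ((splits2 U).map fun q2 => ((splits2 V).map fun q3 =>
          ((shuffles q2.1 q3.1).map fun b => ((shuffles q2.2 q3.2).map fun c =>
            if a = [] then (0:K) else if b = [] then 0
            else A (addLast b.sum a ++ c) * B b).sum).sum).sum).sum :=
    fun a U V => sum_shuffles_splits2 U V (fun b c =>
      if a = [] then (0:K) else if b = [] then 0 else A (addLast b.sum a ++ c) * B b)
  simp only [h3, h4]
  simp only [collapse_amit hB hB0, collapse_anit hB hB0]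
  simp only [← list_sum_sub', ← mul_sub, DD_def]
  simp only [add_mul, list_sum_map_add]
  rw [piece2 A B hA u v hu]
  simp only [piece1 A B hA v hv]
  simp
end Main

/-- if `A` and `B` are alternal moulds in ARI, then `arit(B)·A` is alternal. -/
theorem aritU_alternal (A B : List K → K) (hA0 : A [] = 0) (hB0 : B [] = 0)
    (hA : Alternal A) (hB : Alternal B) : Alternal (aritU B A) := by
  exact aritU_alternal' A B hA0 hB0 hA hB
end

section
/- Let A be a mould with A(u_1,...,u_r)=0 for all r except a fixed odd depth r = 2s+1 ≥ 3, such that A is alternal, A is invariant under neg∘push, and neg(A) = -A (A is an odd function). Then A = 0. -/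
open List

variable {K : Type*} [Field K] [CharZero K]

private theorem shuffles_singleton {α : Type*} (x : α) : ∀ (d : List α),
    shuffles [x] d = (List.range (d.length + 1)).map (fun i => d.insertIdx i x)
  | [] => by
    rw [show shuffles [x] [] = [[x]] from by rw [shuffles]; simp]
    rfl
  | y :: d => by
    have h3 : shuffles [x] (y :: d) =
        ((shuffles [] (y :: d)).map (x :: ·)) ++ ((shuffles [x] d).map (y :: ·)) := by
      conv_lhs => rw [shuffles]
    have h0 : shuffles ([] : List α) (y :: d) = [y :: d] := by rw [shuffles]
    rw [h3, h0, shuffles_singleton x d, List.map_map]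
    conv_rhs => rw [List.length_cons, List.range_succ_eq_map, List.map_cons, List.map_map]
    simp only [List.map_cons, List.map_nil, List.insertIdx_zero, List.cons_append,
      List.nil_append]
    congr 1

private theorem sum_map_neg' {K : Type*} [Field K] (l : List K) :
    (l.map (fun x => -x)).sum = -l.sum := by
  induction l with
  | nil => simp
  | cons x t ih => simp [ih]; ring

private theorem sum_insertIdx' {K : Type*} [Field K] (x : K) : ∀ (d : List K) (i : ℕ),
    i ≤ d.length → (d.insertIdx i x).sum = x + d.sum
  | d, 0, _ => by simp
  | [], i + 1, h => by simp at h
  | y :: d, i + 1, h => by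
    rw [List.insertIdx_succ_cons, List.sum_cons,
      sum_insertIdx' x d i (by simpa using h), List.sum_cons]
    ring

private theorem insertIdx_ne_nil' {α : Type*} (x : α) (l : List α) (hl : l ≠ []) (i : ℕ) :
    l.insertIdx i x ≠ [] := by
  cases l with
  | nil => exact absurd rfl hl
  | cons y l =>
    cases i with
    | zero => simp
    | succ i => simp [List.insertIdx_succ_cons]

private theorem dropLast_insertIdx {α : Type*} (x : α) : ∀ (d : List α) (i : ℕ),
    i < d.length → (d.insertIdx i x).dropLast = d.dropLast.insertIdx i x
  | [], i, h => by simp at h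
  | y :: d, 0, h => by
    cases d with
    | nil => simp
    | cons z d => simp
  | y :: [], i + 1, h => by simp at h
  | y :: z :: d, i + 1, h => by
    rw [List.insertIdx_succ_cons]
    have hne : (z :: d).insertIdx i x ≠ [] := insertIdx_ne_nil' x (z :: d) (by simp) i
    rw [List.dropLast_cons_of_ne_nil hne,
      dropLast_insertIdx x (z :: d) i (by simpa using h)]
    rw [List.dropLast_cons_of_ne_nil (by simp : (z :: d) ≠ [])]
    rw [List.insertIdx_succ_cons]

/-- an alternal mould concentrated in a fixed odd depth `2s+1 ≥ 3`,
invariant under `neg∘push` and odd as a function (`neg(A) = -A`), vanishes. -/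
theorem odd_concentrated_alternal_vanishes (A : List K → K) (s : ℕ) (hs : 1 ≤ s)
    (hconc : ∀ w : List K, w.length ≠ 2 * s + 1 → A w = 0)
    (hal : Alternal A)
    (hinv : ∀ w : List K, negM (pushM A) w = A w)
    (hodd : ∀ w : List K, negM A w = - A w) :
    ∀ w : List K, A w = 0 := by
  -- push anti-invariance: A((-sum u) :: u.dropLast) = -A u
  have hpush : ∀ u : List K, u ≠ [] → A ((-u.sum) :: u.dropLast) = -A u := by
    intro u hu
    have h1 := hinv u
    have h2 := hodd ((-u.sum) :: u.dropLast)
    obtain ⟨a, t, rfl⟩ : ∃ a t, u = a :: t := by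
      cases u with
      | nil => exact absurd rfl hu
      | cons a t => exact ⟨a, t, rfl⟩
    simp only [negM, pushM, List.map_cons] at h1 h2
    rw [show ((fun x => -x) a :: List.map (fun x => -x) t) =
        ((a :: t).map (fun x => -x)) from rfl, sum_map_neg'] at h1
    rw [neg_neg, ← List.map_dropLast] at h1
    rw [neg_neg] at h2
    rw [h1] at h2
    linear_combination h2
  -- single-letter shuffle relation
  have hshuf : ∀ (v : K) (d : List K), d ≠ [] →
      ((List.range (d.length + 1)).map (fun i => A (d.insertIdx i v))).sum = 0 := by
    intro v d hd
    have h := hal [v] d (by simp) hd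
    rwa [shuffles_singleton, List.map_map] at h
  have key : ∀ (a : K) (t : List K), t ≠ [] → A (a :: t) = 0 := by
    intro a t ht
    obtain ⟨v, hv⟩ : ∃ v : K, v = -((a :: t).sum) := ⟨_, rfl⟩
    have hts : v + (a + t.sum) = 0 := by rw [hv, List.sum_cons]; ring
    have hsum : -(v + t.sum) = a := by linear_combination -hts
    have htlen : 1 ≤ t.length := List.length_pos_iff.mpr ht
    -- S1 : insertions of v into t
    have S1 := hshuf v t ht
    -- S2 : insertions of v into (a :: t.dropLast)
    have S2 : ((List.range (t.length + 1)).map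
        (fun i => A ((a :: t.dropLast).insertIdx i v))).sum = 0 := by
      have h := hshuf v (a :: t.dropLast) (by simp)
      rw [List.length_cons, List.length_dropLast] at h
      rwa [show t.length - 1 + 1 = t.length by omega] at h
    -- term 0 of S2
    have G0 : A ((a :: t.dropLast).insertIdx 0 v) = -A (a :: t) := by
      have hp := hpush (a :: t) (by simp)
      rw [← hv, List.dropLast_cons_of_ne_nil ht] at hp
      rw [List.insertIdx_zero]
      exact hp
    -- terms i+1 of S2
    have Gi : ∀ i < t.length,
        A ((a :: t.dropLast).insertIdx (i + 1) v) = -(A (t.insertIdx i v)) := by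
      intro i hi
      have hp := hpush (t.insertIdx i v) (insertIdx_ne_nil' v t ht i)
      rw [sum_insertIdx' v t i hi.le, hsum, dropLast_insertIdx v t i hi] at hp
      rw [List.insertIdx_succ_cons]
      exact hp
    -- last term of S1 via push
    have Gn : A (a :: t) = -(A (t.insertIdx t.length v)) := by
      have hp := hpush (t.insertIdx t.length v) (insertIdx_ne_nil' v t ht _)
      rw [sum_insertIdx' v t t.length le_rfl, hsum, List.insertIdx_length_self,
        List.dropLast_concat] at hp
      rw [List.insertIdx_length_self]
      exact hp
    -- split S2
    have hrange : ((List.range (t.length + 1)).map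
        (fun i => A ((a :: t.dropLast).insertIdx i v))).sum
        = A ((a :: t.dropLast).insertIdx 0 v)
          + ((List.range t.length).map
              (fun i => A ((a :: t.dropLast).insertIdx (i + 1) v))).sum := by
      rw [List.range_succ_eq_map, List.map_cons, List.sum_cons, List.map_map]
      rfl
    have hmid : ((List.range t.length).map
        (fun i => A ((a :: t.dropLast).insertIdx (i + 1) v))).sum
        = -(((List.range t.length).map (fun i => A (t.insertIdx i v))).sum) := by
      rw [List.map_congr_left (fun i hi => Gi i (List.mem_range.mp hi))]
      rw [show (List.range t.length).map (fun i => -(A (t.insertIdx i v)))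
          = ((List.range t.length).map (fun i => A (t.insertIdx i v))).map (fun x => -x) from
        by rw [List.map_map]; rfl]
      exact sum_map_neg' _
    have hS1' : ((List.range t.length).map (fun i => A (t.insertIdx i v))).sum
        = -(A (t.insertIdx t.length v)) := by
      rw [List.range_succ, List.map_append, List.sum_append] at S1
      simp only [List.map_cons, List.map_nil, List.sum_cons, List.sum_nil, add_zero] at S1
      linear_combination S1
    rw [hrange, hmid, hS1', G0] at S2
    linear_combination (Gn - S2) / 2
  intro w
  match w with
  | [] => exact hconc [] (by simp)
  | [a] => exact hconc [a] (by simp; omega)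
  | a :: b :: t => exact key a (b :: t) (by simp)
end

section
/- On moulds, the identity neg∘push = mantar∘swap∘mantar∘swap holds, where swap maps u-moulds to v-moulds and back. -/
open List

variable {K : Type*} [Field K] [CharZero K]

lemma swapVargs_length (w : List K) : (swapVargs w).length = w.length := by
  simp [swapVargs]

lemma pushM_cons (A : List K → K) (a : K) (b : List K) :
    pushM A (a :: b) = A ((-(a :: b).sum) :: (a :: b).dropLast) := rfl

lemma key_swap (w : List K) (hw : w ≠ []) :
    swapUargs ((swapVargs w.reverse).reverse)
      = w.sum :: (w.dropLast.map fun x => -x) := by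
  have hn : 0 < w.length := List.length_pos_iff.mpr hw
  apply List.ext_getElem
  · simp [swapUargs, swapVargs]
    omega
  intro i h1 h2
  simp only [swapUargs, List.reverse_reverse, swapVargs, List.length_reverse,
    List.getElem_zipWith]
  rcases i with _ | j
  · simp [List.take_of_length_le, List.sum_reverse]
  · have hj : j + 1 < w.length := by
      simpa [swapUargs, swapVargs] using h1
    simp only [List.getElem_cons_succ, List.getElem_cons_zero, List.getElem_map,
      List.getElem_range]
    have hk : w.length - (j + 1) < w.reverse.length := by simp; omega
    have hs := List.sum_take_succ w.reverse (w.length - (j+1)) hk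
    have hEq : w.length - (j+1) + 1 = w.length - j := by omega
    rw [hEq] at hs
    rw [hs]
    have hg : w.reverse[w.length - (j+1)]'hk = w[j]'(by omega) := by
      rw [List.getElem_reverse]
      congr 1
      omega
    rw [hg, List.getElem_dropLast]
    ring

/-- the identity `neg ∘ push = mantar ∘ swap ∘ mantar ∘ swap` on moulds. -/
theorem neg_push_eq_mantar_swap_mantar_swap (A : List K → K) :
    negM (pushM A) = mantarM (swapVU (mantarM (swapUV A))) := by
  funext w
  rcases w with _ | ⟨x, w'⟩
  · simp [negM, pushM, mantarM, swapVU, swapUV, swapVargs, swapUargs]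
  · show pushM A ((x :: w').map (fun x => -x)) = _
    rw [List.map_cons, pushM_cons]
    simp only [mantarM, swapVU, swapUV, swapVargs_length, List.length_reverse]
    rw [key_swap (x :: w') (by simp)]
    rw [← mul_assoc, ← mul_pow]
    simp only [neg_mul_neg, one_mul, one_pow]
    have hsum : ∀ l : List K, (l.map (fun x => -x)).sum = -l.sum := by
      intro l; induction l with
      | nil => simp
      | cons a b ih => simp [ih]; ring
    congr 1
    simp [hsum]
    ring
end
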